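/- Let m ≥ 4 be an integer and let i, j ∈ Fin m be indices with j ∉ {i-1, i, i+1} (indices modulo m). Let ε ∈ (ℤ/2)^m be the vector with ε_i = ε_j = 1 and all other coordinates 0. Then the sign-flip involution σ_ε has no fixed point in RZ_m: for every x ∈ RZ_m, σ_ε x ≠ x. -/

import Mathlib

/-- The real moment-angle complex of the boundary of an `m`-gon:
the union over `i : Fin m` of the faces where coordinates `i, i+1` (indices mod `m`)
range in `[-1, 1]` and all other coordinates are `±1`. -/
def RZ (m : ℕ) : Set (Fin m → ℝ) :=
  ⋃ i : Fin m,
    letI : NeZero m := ⟨i.pos.ne'⟩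
    {x | (∀ j, -1 ≤ x j ∧ x j ≤ 1) ∧
      ∀ j, j ≠ i → j ≠ i + 1 → (x j = -1 ∨ x j = 1)}

/-- The coordinatewise sign-flip action of `(ℤ/2)^m` on `ℝ^m`. -/
def signFlip {m : ℕ} (ε : Fin m → ZMod 2) (x : Fin m → ℝ) : Fin m → ℝ :=
  fun j => (-1 : ℝ) ^ (ε j).val * x j

/-- If `m ≥ 4` and `j ∉ {i-1, i, i+1}` (indices mod `m`), then the sign flip in the
coordinates `i` and `j` has no fixed point in `RZ m`. -/
theorem signFlip_two_coords_no_fixed_point (m : ℕ) [NeZero m] (hm : 4 ≤ m)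
    (i j : Fin m) (h₁ : j ≠ i - 1) (h₂ : j ≠ i) (h₃ : j ≠ i + 1)
    (ε : Fin m → ZMod 2) (hε : ε = fun k => if k = i ∨ k = j then 1 else 0) :
    ∀ x ∈ RZ m, signFlip ε x ≠ x := by
  intro x hx hfix
  simp only [RZ, Set.mem_iUnion, Set.mem_setOf_eq] at hx
  obtain ⟨k, hbd, hpm⟩ := hx
  have hxi : x i = 0 := by
    have h := congrFun hfix i
    simp [signFlip, hε, ZMod.val_one] at h
    linarith
  have hxj : x j = 0 := by
    have h := congrFun hfix j
    simp [signFlip, hε, ZMod.val_one] at h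
    linarith
  have hi' : i = k ∨ i = k + 1 := by
    by_contra hc
    push_neg at hc
    rcases hpm i hc.1 hc.2 with h | h <;> rw [hxi] at h <;> norm_num at h
  have hj' : j = k ∨ j = k + 1 := by
    by_contra hc
    push_neg at hc
    rcases hpm j hc.1 hc.2 with h | h <;> rw [hxj] at h <;> norm_num at h
  rcases hi' with hi' | hi' <;> rcases hj' with hj' | hj'
  · exact h₂ (hj'.trans hi'.symm)
  · exact h₃ (by rw [hj', hi'])
  · exact h₁ (by rw [hj', hi']; exact (add_sub_cancel_right k 1).symm)
  · exact h₂ (hj'.trans hi'.symm)
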